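/- Let X be a topological space and f : X → ℝ. Then f satisfies condition (⋆) — for every ε > 0 the restriction of f to D_f^ε = {x : ω_f(x) ≥ ε} is continuous — if and only if for all ε₁, ε₂ > 0 the set D_f^{ε₁,ε₂} is empty, i.e., f ∈ u𝒮₁(X). -/

import Mathlib

open Topology ENNReal Filter Set

/-- Oscillation of `f` at `x`: inf over neighbourhoods `O ∋ x` of `sup_{ξ∈O} ρ(f x, f ξ)`. -/
noncomputable def oscAt {X Y : Type*} [TopologicalSpace X] [PseudoMetricSpace Y]
    (f : X → Y) (x : X) : ℝ≥0∞ :=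
  ⨅ O ∈ 𝓝 x, ⨆ ξ ∈ O, edist (f x) (f ξ)

/-- Oscillation at `x` of the restriction of `f` to `D` (computed in the subspace `D`). -/
noncomputable def oscWithinAt {X Y : Type*} [TopologicalSpace X] [PseudoMetricSpace Y]
    (f : X → Y) (D : Set X) (x : X) : ℝ≥0∞ :=
  ⨅ O ∈ 𝓝[D] x, ⨆ ξ ∈ O, edist (f x) (f ξ)

/-- `DEps f ε = {x : ω_f(x) ≥ ε}`. -/
noncomputable def DEps {X : Type*} [TopologicalSpace X] (f : X → ℝ) (ε : ℝ) : Set X :=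
  {x | ENNReal.ofReal ε ≤ oscAt f x}

/-- Iterated ε-oscillation sets: `DIter f ε n = D_f^{n*ε}` (with `DIter f ε 0 = X`). -/
noncomputable def DIter {X : Type*} [TopologicalSpace X] (f : X → ℝ) (ε : ℝ) : ℕ → Set X
  | 0 => Set.univ
  | n + 1 => {x ∈ DIter f ε n | ENNReal.ofReal ε ≤ oscWithinAt f (DIter f ε n) x}

/-- The class `u𝒮_n(X)`. -/
def uS {X : Type*} [TopologicalSpace X] (n : ℕ) (f : X → ℝ) : Prop :=
  ∀ ε : ℝ, 0 < ε → DIter f ε (n + 1) = ∅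

/-- Iterated closed discontinuity sets `D_f^{n*0}` (with `DIter0 f 0 = X`). -/
def DIter0 {X : Type*} [TopologicalSpace X] (f : X → ℝ) : ℕ → Set X
  | 0 => Set.univ
  | n + 1 => closure {x ∈ DIter0 f n | ¬ ContinuousWithinAt f (DIter0 f n) x}

/-- The class `𝒮_n(X)`. -/
def SClass {X : Type*} [TopologicalSpace X] (n : ℕ) (f : X → ℝ) : Prop :=
  DIter0 f (n + 1) = ∅

/-- `f` is `B₁**` : the restriction of `f` to its set of discontinuity points is continuous. -/
def B1ss {X Y : Type*} [TopologicalSpace X] [PseudoMetricSpace Y] (f : X → Y) : Prop :=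
  ∀ x ∈ {x | ¬ ContinuousAt f x}, ContinuousWithinAt f {x | ¬ ContinuousAt f x} x


lemma oscWithinAt_eq_zero_iff {X Y : Type*} [TopologicalSpace X] [PseudoMetricSpace Y]
    (f : X → Y) (D : Set X) (x : X) :
    oscWithinAt f D x = 0 ↔ ContinuousWithinAt f D x := by
  constructor
  · intro h
    rw [ContinuousWithinAt, EMetric.tendsto_nhds]
    intro ε hε
    have h2 : oscWithinAt f D x < ε := h ▸ hε
    rw [oscWithinAt, iInf_lt_iff] at h2
    obtain ⟨O, hO⟩ := h2
    rw [iInf_lt_iff] at hO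
    obtain ⟨hOmem, hOlt⟩ := hO
    filter_upwards [hOmem] with ξ hξ
    calc edist (f ξ) (f x) = edist (f x) (f ξ) := edist_comm _ _
      _ ≤ ⨆ ξ ∈ O, edist (f x) (f ξ) := le_iSup₂ (f := fun ξ _ => edist (f x) (f ξ)) ξ hξ
      _ < ε := hOlt
  · intro h
    refine le_antisymm ?_ zero_le
    have : ∀ ε : ℝ≥0∞, 0 < ε → oscWithinAt f D x ≤ ε := by
      intro ε hε
      rw [ContinuousWithinAt, EMetric.tendsto_nhds] at h
      have := h ε hε
      refine le_trans (iInf₂_le {ξ | edist (f ξ) (f x) < ε} this) ?_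
      refine iSup₂_le fun ξ hξ => ?_
      rw [edist_comm]
      exact le_of_lt hξ
    by_contra hne
    rw [not_le] at hne
    rcases eq_or_ne (oscWithinAt f D x) ⊤ with htop | htop
    · have := this 1 one_pos
      rw [htop] at this
      exact (lt_irrefl _ (lt_of_le_of_lt le_top (lt_of_le_of_lt this ENNReal.one_lt_top)))
    · have h1 := this (oscWithinAt f D x / 2) (ENNReal.half_pos (ne_of_gt hne))
      have h2 := ENNReal.half_lt_self (ne_of_gt hne) htop
      exact absurd h1 (not_le.mpr h2)

theorem stmt_18 {X : Type*} [TopologicalSpace X] (f : X → ℝ) :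
    (∀ ε : ℝ, 0 < ε → ∀ x ∈ DEps f ε, ContinuousWithinAt f (DEps f ε) x) ↔
      (∀ ε₁ ε₂ : ℝ, 0 < ε₁ → 0 < ε₂ →
        {x ∈ DEps f ε₁ | ENNReal.ofReal ε₂ ≤ oscWithinAt f (DEps f ε₁) x} = ∅) := by
  constructor
  · intro h ε₁ ε₂ hε₁ hε₂
    ext x
    simp only [Set.mem_sep_iff, Set.mem_empty_iff_false, iff_false, not_and]
    intro hx
    have := (oscWithinAt_eq_zero_iff f (DEps f ε₁) x).mpr (h ε₁ hε₁ x hx)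
    rw [this]
    simp [not_le, ENNReal.ofReal_pos, hε₂]
  · intro h ε hε x hx
    rw [← oscWithinAt_eq_zero_iff]
    by_contra hne
    have hpos : 0 < oscWithinAt f (DEps f ε) x := pos_iff_ne_zero.mpr hne
    obtain ⟨ε₂, hε₂pos, hε₂le⟩ : ∃ ε₂ : ℝ, 0 < ε₂ ∧ ENNReal.ofReal ε₂ ≤ oscWithinAt f (DEps f ε) x := by
      rcases eq_or_ne (oscWithinAt f (DEps f ε) x) ⊤ with htop | htop
      · exact ⟨1, one_pos, htop ▸ le_top⟩
      · refine ⟨(oscWithinAt f (DEps f ε) x).toReal, ENNReal.toReal_pos hne htop, ?_⟩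
        rw [ENNReal.ofReal_toReal htop]
    have := h ε ε₂ hε hε₂pos
    have hmem : x ∈ {x ∈ DEps f ε | ENNReal.ofReal ε₂ ≤ oscWithinAt f (DEps f ε) x} := ⟨hx, hε₂le⟩
    rw [this] at hmem
    exact hmem
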